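/- Let n ∈ ℕ, p ∈ (0,1), let H be a finite graph with |V(H)| ≤ n, and let 𝐒 be a finite graph with at least one edge and no isolated vertices (a shape). Define f_𝐒(X) = Σ_S χ_S(X), the sum over all edge sets S ⊆ E(K_n) such that the graph with vertex set the vertices incident to S and edge set S is isomorphic to 𝐒. Then: (i) E_Q[f_𝐒] = 0; (ii) E_Q[f_𝐒²] = M_𝐒 / |Aut(𝐒)|, where M_𝐒 = n_(|V(𝐒)|) is the number of labelled copies of 𝐒 in K_n and |Aut(𝐒)| is the number of graph automorphisms of 𝐒 (equivalently, E_Q[f_𝐒²] equals the number of edge sets S ⊆ E(K_n) whose induced graph is isomorphic to 𝐒); and (iii) E_P[f_𝐒] = ( M_{𝐒,H} / |Aut(𝐒)| ) · ((1−p)/p)^{|E(𝐒)|/2}. -/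

import Mathlib

open Filter

namespace Planted

abbrev Edge (n : ℕ) := {e : Sym2 (Fin n) // ¬ e.IsDiag}

abbrev EdgeFun (n : ℕ) := Edge n → Bool

noncomputable def nullWeight (n : ℕ) (p : ℝ) (X : EdgeFun n) : ℝ :=
  ∏ e : Edge n, if X e then p else 1 - p

noncomputable def expQ (n : ℕ) (p : ℝ) (f : EdgeFun n → ℝ) : ℝ :=
  ∑ X : EdgeFun n, nullWeight n p X * f X

noncomputable def varQ (n : ℕ) (p : ℝ) (f : EdgeFun n → ℝ) : ℝ :=
  expQ n p fun X => (f X - expQ n p f) ^ 2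

open Classical in
noncomputable def plant {V : Type} (n : ℕ) (H : SimpleGraph V) (φ : V ↪ Fin n)
    (X : EdgeFun n) : EdgeFun n :=
  fun e => if ∃ u v, H.Adj u v ∧ (e : Sym2 (Fin n)) = s(φ u, φ v) then true else X e

open Classical in
noncomputable def expP {V : Type} [Fintype V] (n : ℕ) (p : ℝ) (H : SimpleGraph V)
    (f : EdgeFun n → ℝ) : ℝ :=
  (Fintype.card (V ↪ Fin n) : ℝ)⁻¹ *
    ∑ φ : V ↪ Fin n, ∑ X : EdgeFun n, nullWeight n p X * f (plant n H φ X)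

noncomputable def varP {V : Type} [Fintype V] (n : ℕ) (p : ℝ) (H : SimpleGraph V)
    (f : EdgeFun n → ℝ) : ℝ :=
  expP n p H fun X => (f X - expP n p H f) ^ 2

noncomputable def chi (n : ℕ) (p : ℝ) (S : Finset (Edge n)) (X : EdgeFun n) : ℝ :=
  ∏ e ∈ S, ((if X e then (1 : ℝ) else 0) - p) / Real.sqrt (p * (1 - p))

def IsDegreeLE (n : ℕ) (p : ℝ) (D : ℕ) (f : EdgeFun n → ℝ) : Prop :=
  f ∈ Submodule.span ℝ {g : EdgeFun n → ℝ | ∃ S : Finset (Edge n), S.card ≤ D ∧ g = chi n p S}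

noncomputable def advOf {V : Type} [Fintype V] (n : ℕ) (p : ℝ) (H : SimpleGraph V)
    (f : EdgeFun n → ℝ) : ℝ :=
  expP n p H f / Real.sqrt (expQ n p fun X => f X ^ 2)

noncomputable def Adv {V : Type} [Fintype V] (n : ℕ) (p : ℝ) (D : ℕ)
    (H : SimpleGraph V) : ℝ :=
  sSup {r : ℝ | ∃ f, IsDegreeLE n p D f ∧ f ≠ 0 ∧ r = advOf n p H f}

def IsStar (n t : ℕ) (S : Finset (Edge n)) : Prop :=
  S.card = t ∧ ∃ v : Fin n, ∀ e ∈ S, v ∈ (e : Sym2 (Fin n))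

open Classical in
noncomputable def starCount (n : ℕ) (p : ℝ) (t : ℕ) : EdgeFun n → ℝ :=
  fun X => ∑ S : Finset (Edge n), if IsStar n t S then chi n p S X else 0

def StronglySeparates {Vf : ℕ → Type} [∀ n, Fintype (Vf n)] (p : ℕ → ℝ)
    (H : ∀ n, SimpleGraph (Vf n)) (f : ∀ n, EdgeFun n → ℝ) : Prop :=
  (fun n => max (Real.sqrt (varP n (p n) (H n) (f n))) (Real.sqrt (varQ n (p n) (f n))))
    =o[atTop] fun n => expP n (p n) (H n) (f n) - expQ n (p n) (f n)

noncomputable def copyCount {α β : Type} (S : SimpleGraph α) (G : SimpleGraph β) : ℕ :=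
  Nat.card {f : α ↪ β // ∀ u v, S.Adj u v → G.Adj (f u) (f v)}

def starGraph (t : ℕ) : SimpleGraph (Fin (t + 1)) :=
  SimpleGraph.fromRel fun u _ => u = 0

open Classical in
noncomputable def edgeVerts (n : ℕ) (S : Finset (Edge n)) : Finset (Fin n) :=
  Finset.univ.filter fun v => ∃ e ∈ S, v ∈ (e : Sym2 (Fin n))

def finsetGraph (n : ℕ) (S : Finset (Edge n)) :
    SimpleGraph {v : Fin n // v ∈ edgeVerts n S} where
  Adj u v := ∃ e ∈ S, (e : Sym2 (Fin n)) = s(u.1, v.1)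
  symm := by
    constructor
    rintro u v ⟨e, he, heq⟩
    exact ⟨e, he, heq.trans Sym2.eq_swap⟩
  loopless := by
    constructor
    rintro u ⟨e, he, heq⟩
    exact e.2 (by rw [heq]; exact Sym2.mk_isDiag_iff.mpr rfl)

noncomputable def finCopyCount (n : ℕ) (S : Finset (Edge n)) {V : Type}
    (H : SimpleGraph V) : ℕ :=
  copyCount (finsetGraph n S) H

end Planted

namespace PlantedAux
open Planted Classical

variable {n : ℕ} {p : ℝ}

lemma sum_prod_bool (g : Edge n → Bool → ℝ) :
    ∑ X : EdgeFun n, ∏ e : Edge n, g e (X e) = ∏ e : Edge n, ∑ b, g e b := by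
  rw [Finset.prod_univ_sum, Fintype.piFinset_univ]

lemma expQ_prod (g : Edge n → Bool → ℝ) :
    expQ n p (fun X => ∏ e : Edge n, g e (X e)) =
      ∏ e : Edge n, (p * g e true + (1 - p) * g e false) := by
  unfold expQ nullWeight
  have h : ∀ X : EdgeFun n,
      (∏ e : Edge n, if X e then p else 1 - p) * (∏ e : Edge n, g e (X e)) =
      ∏ e : Edge n, ((if X e then p else 1 - p) * g e (X e)) := by
    intro X; rw [Finset.prod_mul_distrib]
  simp_rw [h]
  rw [sum_prod_bool (fun e b => (if b then p else 1 - p) * g e b)]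
  congr 1; ext e
  simp

noncomputable def psi (p : ℝ) (b : Bool) : ℝ :=
  ((if b then (1 : ℝ) else 0) - p) / Real.sqrt (p * (1 - p))

lemma chi_eq (T : Finset (Edge n)) (X : EdgeFun n) :
    chi n p T X = ∏ e : Edge n, (if e ∈ T then psi p (X e) else 1) := by
  rw [chi, Finset.prod_ite_mem, Finset.univ_inter]
  rfl

lemma psi_mean_zero (hp : p ∈ Set.Ioo (0:ℝ) 1) :
    p * psi p true + (1 - p) * psi p false = 0 := by
  unfold psi; simp; ring

lemma psi_sq_mean_one (hp : p ∈ Set.Ioo (0:ℝ) 1) :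
    p * (psi p true)^2 + (1 - p) * (psi p false)^2 = 1 := by
  have h1 : (0:ℝ) < p := hp.1
  have h2 : p < 1 := hp.2
  have hpos : 0 < p * (1 - p) := by nlinarith
  unfold psi
  simp only [Bool.false_eq_true, eq_self_iff_true, if_true, if_false]
  rw [div_pow, div_pow, Real.sq_sqrt hpos.le]
  have h3 : (1 - p) ≠ 0 := by linarith
  field_simp
  ring

lemma expQ_chi (hp : p ∈ Set.Ioo (0:ℝ) 1) (T : Finset (Edge n)) :
    expQ n p (chi n p T) = if T = ∅ then 1 else 0 := by
  have : chi n p T = fun X => ∏ e : Edge n, (if e ∈ T then psi p (X e) else 1) := by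
    funext X; exact chi_eq T X
  rw [this, expQ_prod (fun e b => if e ∈ T then psi p b else 1)]
  by_cases hT : T = ∅
  · simp [hT]
  · rw [if_neg hT]
    obtain ⟨e, he⟩ := Finset.nonempty_iff_ne_empty.mpr hT
    apply Finset.prod_eq_zero (Finset.mem_univ e)
    rw [if_pos he, if_pos he, psi_mean_zero hp]

lemma expQ_chi_mul_chi (hp : p ∈ Set.Ioo (0:ℝ) 1) (T U : Finset (Edge n)) :
    expQ n p (fun X => chi n p T X * chi n p U X) = if T = U then 1 else 0 := by
  have h : (fun X : EdgeFun n => chi n p T X * chi n p U X) =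
      fun X => ∏ e : Edge n,
        ((if e ∈ T then psi p (X e) else 1) * (if e ∈ U then psi p (X e) else 1)) := by
    funext X; rw [chi_eq, chi_eq, Finset.prod_mul_distrib]
  rw [h, expQ_prod (fun e b => (if e ∈ T then psi p b else 1) * (if e ∈ U then psi p b else 1))]
  by_cases hTU : T = U
  · subst hTU
    rw [if_pos rfl]
    apply Finset.prod_eq_one
    intro e _
    by_cases he : e ∈ T
    · simp only [if_pos he, ← sq]
      exact psi_sq_mean_one hp
    · simp [he]
  · rw [if_neg hTU]
    have : ∃ e, (e ∈ T ∧ e ∉ U) ∨ (e ∈ U ∧ e ∉ T) := by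
      by_contra hc
      push_neg at hc
      exact hTU (Finset.ext fun e => by
        have := hc e; tauto)
    obtain ⟨e, he⟩ := this
    apply Finset.prod_eq_zero (Finset.mem_univ e)
    rcases he with ⟨h1, h2⟩ | ⟨h1, h2⟩ <;>
      simp only [if_pos h1, if_neg h2, mul_one, one_mul] <;>
      exact psi_mean_zero hp

end PlantedAux

namespace PlantedAux
open Planted

variable {W : Type} [Fintype W] {n : ℕ}

noncomputable def Tof (S : SimpleGraph W) (γ : W ↪ Fin n) : Finset (Edge n) :=
  @Finset.filter _
    (fun e => ∃ u v, S.Adj u v ∧ (e : Sym2 (Fin n)) = s(γ u, γ v))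
    (Classical.decPred _) Finset.univ

lemma mem_Tof {S : SimpleGraph W} {γ : W ↪ Fin n} {e : Edge n} :
    e ∈ Tof S γ ↔ ∃ u v, S.Adj u v ∧ (e : Sym2 (Fin n)) = s(γ u, γ v) := by
  classical
  simp [Tof]

lemma edge_nd {S : SimpleGraph W} (γ : W ↪ Fin n) {u v : W} (h : S.Adj u v) :
    ¬ (s(γ u, γ v) : Sym2 (Fin n)).IsDiag := by
  rw [Sym2.mk_isDiag_iff]
  exact fun hh => h.ne (γ.injective hh)

lemma edge_mem_Tof {S : SimpleGraph W} (γ : W ↪ Fin n) {u v : W} (h : S.Adj u v) :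
    (⟨s(γ u, γ v), edge_nd γ h⟩ : Edge n) ∈ Tof S γ :=
  mem_Tof.mpr ⟨u, v, h, rfl⟩

lemma mem_edgeVerts_iff {T : Finset (Edge n)} {v : Fin n} :
    v ∈ edgeVerts n T ↔ ∃ e ∈ T, v ∈ (e : Sym2 (Fin n)) := by
  classical
  simp [edgeVerts]

lemma mem_edgeVerts_Tof {S : SimpleGraph W} (hnoiso : ∀ v : W, ∃ u : W, S.Adj v u)
    (γ : W ↪ Fin n) (w : W) : γ w ∈ edgeVerts n (Tof S γ) := by
  obtain ⟨u, hu⟩ := hnoiso w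
  exact mem_edgeVerts_iff.mpr ⟨_, edge_mem_Tof γ hu, Sym2.mem_mk_left _ _⟩


variable {S : SimpleGraph W}

noncomputable def Fmap (hnoiso : ∀ v : W, ∃ u : W, S.Adj v u) (γ : W ↪ Fin n) :
    W → {v : Fin n // v ∈ edgeVerts n (Tof S γ)} :=
  fun w => ⟨γ w, mem_edgeVerts_Tof hnoiso γ w⟩

lemma Fmap_bij (hnoiso : ∀ v : W, ∃ u : W, S.Adj v u) (γ : W ↪ Fin n) :
    Function.Bijective (Fmap hnoiso γ) := by
  constructor
  · intro a b h
    exact γ.injective (congrArg Subtype.val h)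
  · rintro ⟨v, hv⟩
    obtain ⟨e, heT, hve⟩ := mem_edgeVerts_iff.mp hv
    obtain ⟨u, u', hadj, heq⟩ := mem_Tof.mp heT
    rw [heq] at hve
    rcases Sym2.mem_iff.mp hve with h | h
    · exact ⟨u, by simp [Fmap, h]⟩
    · exact ⟨u', by simp [Fmap, h]⟩

lemma adj_Tof_iff (hnoiso : ∀ v : W, ∃ u : W, S.Adj v u) (γ : W ↪ Fin n) (u v : W) :
    (finsetGraph n (Tof S γ)).Adj (Fmap hnoiso γ u) (Fmap hnoiso γ v) ↔ S.Adj u v := by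
  constructor
  · rintro ⟨e, heT, heq⟩
    obtain ⟨a, b, hab, he2⟩ := mem_Tof.mp heT
    rw [he2] at heq
    rcases Sym2.eq_iff.mp heq with ⟨h1, h2⟩ | ⟨h1, h2⟩
    · have e1 : a = u := γ.injective h1
      have e2 : b = v := γ.injective h2
      rw [e1, e2] at hab; exact hab
    · have e1 : a = v := γ.injective h1
      have e2 : b = u := γ.injective h2
      rw [e1, e2] at hab; exact hab.symm
  · intro h
    exact ⟨⟨s(γ u, γ v), edge_nd γ h⟩, edge_mem_Tof γ h, rfl⟩

noncomputable def isoOf (hnoiso : ∀ v : W, ∃ u : W, S.Adj v u) (γ : W ↪ Fin n) :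
    finsetGraph n (Tof S γ) ≃g S where
  toEquiv := (Equiv.ofBijective _ (Fmap_bij hnoiso γ)).symm
  map_rel_iff' := by
    intro a b
    obtain ⟨u, rfl⟩ := (Fmap_bij hnoiso γ).2 a
    obtain ⟨v, rfl⟩ := (Fmap_bij hnoiso γ).2 b
    simp only [Equiv.ofBijective_symm_apply_apply]
    exact (adj_Tof_iff hnoiso γ u v).symm

def BType (n : ℕ) (S : SimpleGraph W) (P : Sym2 (Fin n) → Prop) : Type :=
  Σ T : Finset (Edge n), ((finsetGraph n T ≃g S) × PLift (∀ e ∈ T, P (e : Sym2 (Fin n))))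

def AType (n : ℕ) (S : SimpleGraph W) (P : Sym2 (Fin n) → Prop) : Type :=
  {γ : W ↪ Fin n // ∀ u v, S.Adj u v → P s(γ u, γ v)}

noncomputable def toB (hnoiso : ∀ v : W, ∃ u : W, S.Adj v u) (P : Sym2 (Fin n) → Prop) :
    AType n S P → BType n S P :=
  fun a => ⟨Tof S a.1, isoOf hnoiso a.1, ⟨by
    intro e he
    obtain ⟨u, v, hadj, heq⟩ := mem_Tof.mp he
    rw [heq]
    exact a.2 u v hadj⟩⟩

noncomputable def fromB (P : Sym2 (Fin n) → Prop) : BType n S P → AType n S P :=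
  fun b => ⟨⟨fun w => (b.2.1.symm w : {v : Fin n // v ∈ edgeVerts n b.1}).1,
    fun x y h => b.2.1.symm.injective (Subtype.ext h)⟩, by
    intro u v huv
    have hadj : (finsetGraph n b.1).Adj (b.2.1.symm u) (b.2.1.symm v) :=
      b.2.1.symm.map_rel_iff.mpr huv
    obtain ⟨e, heT, heq⟩ := hadj
    have hpe := b.2.2.down e heT
    rw [heq] at hpe
    exact hpe⟩

lemma fromB_toB (hnoiso : ∀ v : W, ∃ u : W, S.Adj v u) (P : Sym2 (Fin n) → Prop)
    (a : AType n S P) : fromB P (toB hnoiso P a) = a := by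
  apply Subtype.ext
  apply DFunLike.ext
  intro w
  rfl

lemma Tof_fromB (P : Sym2 (Fin n) → Prop) (b : BType n S P) :
    Tof S (fromB P b).1 = b.1 := by
  obtain ⟨T, g, hP⟩ := b
  ext e
  rw [mem_Tof]
  constructor
  · rintro ⟨u, v, huv, heq⟩
    have hadj : (finsetGraph n T).Adj (g.symm u) (g.symm v) := g.symm.map_rel_iff.mpr huv
    obtain ⟨e', he'T, he'q⟩ := hadj
    have : e = e' := Subtype.ext (by rw [heq, he'q]; rfl)
    rwa [this]
  · intro heT
    obtain ⟨⟨a, b⟩, hab⟩ := Quot.exists_rep (e : Sym2 (Fin n))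
    have ha : a ∈ edgeVerts n T := mem_edgeVerts_iff.mpr ⟨e, heT, by rw [← hab]; exact Sym2.mem_mk_left a b⟩
    have hb : b ∈ edgeVerts n T := mem_edgeVerts_iff.mpr ⟨e, heT, by rw [← hab]; exact Sym2.mem_mk_right a b⟩
    have hadj : (finsetGraph n T).Adj ⟨a, ha⟩ ⟨b, hb⟩ := ⟨e, heT, hab.symm⟩
    refine ⟨g ⟨a, ha⟩, g ⟨b, hb⟩, g.map_rel_iff.mpr hadj, ?_⟩
    show (e : Sym2 (Fin n)) = s((g.symm (g ⟨a, ha⟩) : {v : Fin n // v ∈ edgeVerts n T}).1,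
      (g.symm (g ⟨b, hb⟩) : {v : Fin n // v ∈ edgeVerts n T}).1)
    rw [RelIso.symm_apply_apply, RelIso.symm_apply_apply]
    exact hab.symm

lemma toB_injective (hnoiso : ∀ v : W, ∃ u : W, S.Adj v u) (P : Sym2 (Fin n) → Prop) :
    Function.Injective (toB hnoiso P) :=
  Function.LeftInverse.injective (fromB_toB hnoiso P)

lemma fromB_injective (P : Sym2 (Fin n) → Prop) :
    Function.Injective (fromB (S := S) (n := n) P) := by
  rintro ⟨T, g, hP⟩ ⟨T', g', hP'⟩ h
  have hT : T = T' := by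
    have h1 := Tof_fromB P ⟨T, g, hP⟩
    have h2 := Tof_fromB P ⟨T', g', hP'⟩
    rw [h] at h1
    exact h1.symm.trans h2
  subst hT
  have hval : ∀ w, ((g.symm w : _) : Fin n) = ((g'.symm w : _) : Fin n) := by
    intro w
    exact congrArg (fun γ : AType n S P => (γ.1 : W → Fin n) w) h
  have hsymm : ∀ w, g.symm w = g'.symm w := fun w => Subtype.ext (hval w)
  have hg : g = g' := by
    have happ : ∀ x, g x = g' x := by
      intro x
      have h1 : g'.symm (g x) = x := by rw [← hsymm (g x)]; simp
      calc g x = g' (g'.symm (g x)) := by rw [RelIso.apply_symm_apply]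
        _ = g' x := by rw [h1]
    exact DFunLike.ext _ _ happ
  subst hg
  exact congrArg (fun z => (⟨T, g, z⟩ : BType n S P)) (Subsingleton.elim hP hP')

end PlantedAux

namespace PlantedAux
open Planted

variable {W : Type} [Fintype W] {n : ℕ} {S : SimpleGraph W}

attribute [local instance] Classical.propDecidable

noncomputable instance isoFinite {α β : Type} [Finite α] (G : SimpleGraph α) (G' : SimpleGraph β) :
    Finite (G ≃g G') :=
  Finite.of_injective (fun f => (f.toEquiv : α ≃ β))
    (fun f g h => by cases f; cases g; simpa using h)

instance atypeFinite (P : Sym2 (Fin n) → Prop) : Finite (AType n S P) :=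
  Subtype.finite

instance btypeFinite (P : Sym2 (Fin n) → Prop) : Finite (BType n S P) := by
  unfold BType
  infer_instance

lemma card_plift (c : Prop) : Nat.card (PLift c) = if c then 1 else 0 := by
  by_cases h : c
  · rw [if_pos h]
    haveI : Nonempty (PLift c) := ⟨⟨h⟩⟩
    exact Nat.card_unique
  · rw [if_neg h]
    haveI : IsEmpty (PLift c) := ⟨fun a => h a.down⟩
    exact Nat.card_of_isEmpty

lemma card_iso_eq (T : Finset (Edge n)) :
    Nat.card (finsetGraph n T ≃g S) =
      if Nonempty (finsetGraph n T ≃g S) then Nat.card (S ≃g S) else 0 := by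
  by_cases h : Nonempty (finsetGraph n T ≃g S)
  · rw [if_pos h]
    obtain ⟨g0⟩ := h
    refine Nat.card_congr ⟨fun e => g0.symm.trans e, fun f => g0.trans f, ?_, ?_⟩
    · intro e
      apply DFunLike.ext
      intro x
      simp
    · intro f
      apply DFunLike.ext
      intro x
      simp
  · rw [if_neg h]
    haveI := not_nonempty_iff.mp h
    exact Nat.card_of_isEmpty

lemma card_B (P : Sym2 (Fin n) → Prop) :
    Nat.card (BType n S P) =
      ∑ T : Finset (Edge n),
        if Nonempty (finsetGraph n T ≃g S) ∧ (∀ e ∈ T, P (e : Sym2 (Fin n)))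
        then Nat.card (S ≃g S) else 0 := by
  classical
  haveI : ∀ T : Finset (Edge n),
      Fintype ((finsetGraph n T ≃g S) × PLift (∀ e ∈ T, P (e : Sym2 (Fin n)))) :=
    fun T => Fintype.ofFinite _
  rw [show (BType n S P) =
      (Σ T : Finset (Edge n), ((finsetGraph n T ≃g S) × PLift (∀ e ∈ T, P (e : Sym2 (Fin n))))) from rfl]
  rw [Nat.card_eq_fintype_card, Fintype.card_sigma]
  apply Finset.sum_congr rfl
  intro T _
  rw [← Nat.card_eq_fintype_card, Nat.card_prod, card_iso_eq, card_plift]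
  by_cases h1 : Nonempty (finsetGraph n T ≃g S) <;>
    by_cases h2 : ∀ e ∈ T, P (e : Sym2 (Fin n)) <;>
    simp [h1, h2]

lemma card_A (hnoiso : ∀ v : W, ∃ u : W, S.Adj v u) (P : Sym2 (Fin n) → Prop) :
    Nat.card (AType n S P) =
      ∑ T : Finset (Edge n),
        if Nonempty (finsetGraph n T ≃g S) ∧ (∀ e ∈ T, P (e : Sym2 (Fin n)))
        then Nat.card (S ≃g S) else 0 := by
  rw [← card_B]
  exact le_antisymm
    (Nat.card_le_card_of_injective _ (toB_injective hnoiso P))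
    (Nat.card_le_card_of_injective _ (fromB_injective P))

lemma card_A_true (hnoiso : ∀ v : W, ∃ u : W, S.Adj v u) :
    Nat.card (AType n S (fun _ => True)) = n.descFactorial (Fintype.card W) := by
  classical
  have e : AType n S (fun _ => True) ≃ (W ↪ Fin n) :=
    Equiv.subtypeUnivEquiv (fun γ => fun u v _ => trivial)
  rw [Nat.card_congr e, Nat.card_eq_fintype_card, Fintype.card_embedding_eq, Fintype.card_fin]

end PlantedAux

namespace PlantedAux
open Planted

variable {W : Type} [Fintype W] {n : ℕ} {S : SimpleGraph W}

attribute [local instance] Classical.propDecidable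

lemma card_A_plant {V : Type} [Fintype V] (H : SimpleGraph V) (φ : V ↪ Fin n)
    (hnoiso : ∀ v : W, ∃ u : W, S.Adj v u) :
    Nat.card (AType n S (fun q => ∃ u v, H.Adj u v ∧ q = s(φ u, φ v))) = copyCount S H := by
  rw [copyCount]
  set P : Sym2 (Fin n) → Prop := fun q => ∃ u v, H.Adj u v ∧ q = s(φ u, φ v) with hPdef
  set C := {f : W ↪ V // ∀ u v, S.Adj u v → H.Adj (f u) (f v)} with hC
  refine le_antisymm ?_ ?_
  · -- A → C injectively
    have claim : ∀ a : AType n S P, ∀ w : W, ∃ x : V, φ x = a.1 w := by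
      rintro ⟨γ, hγ⟩ w
      obtain ⟨u, hu⟩ := hnoiso w
      obtain ⟨x, y, _, hxy⟩ := hγ w u hu
      rcases Sym2.eq_iff.mp hxy with ⟨h1, _⟩ | ⟨h1, _⟩
      · exact ⟨x, h1.symm⟩
      · exact ⟨y, h1.symm⟩
    have hspec : ∀ (a : AType n S P) (w : W), φ (Classical.choose (claim a w)) = a.1 w :=
      fun a w => Classical.choose_spec (claim a w)
    refine Nat.card_le_card_of_injective
      (fun a => ⟨⟨fun w => Classical.choose (claim a w),
        fun x y h => a.1.injective (by rw [← hspec a x, ← hspec a y]; exact congrArg φ h)⟩, ?_⟩) ?_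
    · intro u v huv
      show H.Adj (Classical.choose (claim a u)) (Classical.choose (claim a v))
      obtain ⟨x, y, hxy, heq⟩ := a.2 u v huv
      have h1 : φ (Classical.choose (claim a u)) = a.1 u := hspec a u
      have h2 : φ (Classical.choose (claim a v)) = a.1 v := hspec a v
      rcases Sym2.eq_iff.mp heq with ⟨e1, e2⟩ | ⟨e1, e2⟩
      · have : Classical.choose (claim a u) = x := φ.injective (by rw [h1, e1])
        have h2' : Classical.choose (claim a v) = y := φ.injective (by rw [h2, e2])
        rw [this, h2']
        exact hxy
      · have : Classical.choose (claim a u) = y := φ.injective (by rw [h1, e1])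
        have h2' : Classical.choose (claim a v) = x := φ.injective (by rw [h2, e2])
        rw [this, h2']
        exact hxy.symm
    · intro a b h
      apply Subtype.ext
      apply DFunLike.ext
      intro w
      have hcb : Classical.choose (claim a w) = Classical.choose (claim b w) :=
        congrArg (fun z : C => (z.1 : W → V) w) h
      rw [← hspec a w, ← hspec b w, hcb]
  · -- C → A injectively
    refine Nat.card_le_card_of_injective
      (fun c => ⟨c.1.trans φ, fun u v huv => ⟨c.1 u, c.1 v, c.2 u v huv, rfl⟩⟩) ?_
    intro a b h
    apply Subtype.ext
    apply DFunLike.ext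
    intro w
    have hcb : φ (a.1 w) = φ (b.1 w) :=
      congrArg (fun z : AType n S P => (z.1 : W → Fin n) w) h
    exact φ.injective hcb

lemma edge_desc {T : Finset (Edge n)} (q : Sym2 {v : Fin n // v ∈ edgeVerts n T})
    (hq : q ∈ (finsetGraph n T).edgeSet) :
    ∃ e ∈ T, (e : Sym2 (Fin n)) = Sym2.map Subtype.val q := by
  revert hq
  induction q using Sym2.ind with
  | _ x y =>
    intro hq
    obtain ⟨e, heT, heq⟩ := (SimpleGraph.mem_edgeSet _).mp hq
    exact ⟨e, heT, by rw [Sym2.map_pair_eq]; exact heq⟩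

lemma card_edge (T : Finset (Edge n)) (g : finsetGraph n T ≃g S) :
    T.card = Nat.card S.edgeSet := by
  classical
  have h1 : Nat.card (finsetGraph n T).edgeSet = Nat.card S.edgeSet :=
    Nat.card_congr g.mapEdgeSet
  rw [← h1]
  have claim : ∀ q : (finsetGraph n T).edgeSet,
      ∃ e : {e : Edge n // e ∈ T}, ((e : Edge n) : Sym2 (Fin n)) = Sym2.map Subtype.val q.1 := by
    rintro ⟨q, hq⟩
    obtain ⟨e, heT, heq⟩ := edge_desc q hq
    exact ⟨⟨e, heT⟩, heq⟩
  have hspec := fun q => Classical.choose_spec (claim q)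
  have hF : Function.Bijective (fun q => Classical.choose (claim q)) := by
    constructor
    · intro q q' h
      apply Subtype.ext
      apply Sym2.map.injective Subtype.val_injective
      rw [← hspec q, ← hspec q']
      exact congrArg (fun e : {e : Edge n // e ∈ T} => ((e : Edge n) : Sym2 (Fin n))) h
    · rintro ⟨e, heT⟩
      obtain ⟨⟨a, b⟩, hab⟩ := Quot.exists_rep (e : Sym2 (Fin n))
      have ha : a ∈ edgeVerts n T := mem_edgeVerts_iff.mpr
        ⟨e, heT, by rw [← hab]; exact Sym2.mem_mk_left a b⟩
      have hb : b ∈ edgeVerts n T := mem_edgeVerts_iff.mpr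
        ⟨e, heT, by rw [← hab]; exact Sym2.mem_mk_right a b⟩
      have hadj : (finsetGraph n T).Adj ⟨a, ha⟩ ⟨b, hb⟩ := ⟨e, heT, hab.symm⟩
      set q : (finsetGraph n T).edgeSet := ⟨s(⟨a, ha⟩, ⟨b, hb⟩), (SimpleGraph.mem_edgeSet _).mpr hadj⟩
      refine ⟨q, ?_⟩
      show Classical.choose (claim q) = ⟨e, heT⟩
      apply Subtype.ext
      apply Subtype.ext
      have := hspec q
      rw [this]
      show Sym2.map Subtype.val (s(⟨a, ha⟩, ⟨b, hb⟩) : Sym2 {v : Fin n // v ∈ edgeVerts n T}) = (e : Sym2 (Fin n))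
      rw [Sym2.map_pair_eq]
      exact hab
  have h2 : Nat.card (finsetGraph n T).edgeSet = Nat.card {e : Edge n // e ∈ T} :=
    Nat.card_eq_of_bijective _ hF
  rw [h2, Nat.card_eq_fintype_card, Fintype.card_coe]

end PlantedAux

namespace PlantedAux
open Planted

variable {W : Type} [Fintype W] {n : ℕ} {S : SimpleGraph W}

attribute [local instance] Classical.propDecidable

lemma expQ_sum {ι : Type} {p : ℝ} (s : Finset ι) (h : ι → EdgeFun n → ℝ) :
    expQ n p (fun X => ∑ i ∈ s, h i X) = ∑ i ∈ s, expQ n p (h i) := by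
  unfold expQ
  simp_rw [Finset.mul_sum]
  rw [Finset.sum_comm]

lemma expQ_zero {p : ℝ} : expQ n p (fun _ => (0 : ℝ)) = 0 := by
  unfold expQ
  simp

lemma inner_sum {p : ℝ} (hp : p ∈ Set.Ioo (0:ℝ) 1) {V : Type} (H : SimpleGraph V)
    (φ : V ↪ Fin n) (T : Finset (Edge n)) :
    ∑ X : EdgeFun n, nullWeight n p X * chi n p T (plant n H φ X) =
      if ∀ e ∈ T, (∃ u v, H.Adj u v ∧ (e : Sym2 (Fin n)) = s(φ u, φ v))
      then ((1 - p) / Real.sqrt (p * (1 - p))) ^ T.card else 0 := by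
  set Pl : Edge n → Prop := fun e => ∃ u v, H.Adj u v ∧ (e : Sym2 (Fin n)) = s(φ u, φ v) with hPl
  have h : (fun X => chi n p T (plant n H φ X)) =
      fun X : EdgeFun n => ∏ e : Edge n,
        (fun e b => if e ∈ T then psi p (if Pl e then true else b) else 1) e (X e) := by
    funext X
    rw [chi_eq]
    apply Finset.prod_congr rfl
    intro e _
    show (if e ∈ T then psi p (plant n H φ X e) else 1) =
      (if e ∈ T then psi p (if Pl e then true else X e) else 1)
    by_cases he : e ∈ T
    · simp only [he, if_true]
      congr 1
    · simp [he]
  show expQ n p (fun X => chi n p T (plant n H φ X)) = _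
  rw [h, expQ_prod (fun e b => if e ∈ T then psi p (if Pl e then true else b) else 1)]
  have hpt : psi p true = (1 - p) / Real.sqrt (p * (1 - p)) := by simp [psi]
  have step : ∀ e : Edge n,
      (p * (if e ∈ T then psi p (if Pl e then true else true) else 1) +
        (1 - p) * (if e ∈ T then psi p (if Pl e then true else false) else 1)) =
      (if e ∈ T then (if Pl e then psi p true else 0) else 1) := by
    intro e
    by_cases he : e ∈ T
    · by_cases hpl : Pl e
      · simp [he, hpl]; ring
      · simp [he, hpl]; linarith [psi_mean_zero hp]
    · simp [he]
  rw [Finset.prod_congr rfl (fun e _ => step e)]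
  by_cases hall : ∀ e ∈ T, Pl e
  · rw [if_pos hall]
    have step2 : ∀ e ∈ Finset.univ,
        (if e ∈ T then (if Pl e then psi p true else 0) else 1) =
        (if e ∈ T then (1 - p) / Real.sqrt (p * (1 - p)) else 1) := by
      intro e _
      by_cases he : e ∈ T
      · simp [he, hall e he, hpt]
      · simp [he]
    rw [Finset.prod_congr rfl step2]
    simp only [Finset.prod_ite_mem, Finset.univ_inter, Finset.prod_const]
  · rw [if_neg hall]
    push_neg at hall
    obtain ⟨e, heT, hne⟩ := hall
    exact Finset.prod_eq_zero (Finset.mem_univ e) (by simp [heT, hne])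

end PlantedAux

set_option maxHeartbeats 2000000 in
open Planted in
open Classical in
/-- moments of the signed subgraph-count polynomial of a shape 𝐒. -/
theorem signed_count_moments
    {W V : Type} [Fintype W] [Fintype V]
    (n : ℕ) (p : ℝ) (hp : p ∈ Set.Ioo (0 : ℝ) 1)
    (H : SimpleGraph V) (hcard : Fintype.card V ≤ n)
    (S : SimpleGraph W)
    (hedge : ∃ u v : W, S.Adj u v)
    (hnoiso : ∀ v : W, ∃ u : W, S.Adj v u) :
    -- the signed count of 𝐒: sum of χ_T over edge sets T whose induced graph is ≅ 𝐒
    let f : EdgeFun n → ℝ := fun X =>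
      ∑ T : Finset (Edge n),
        if Nonempty (finsetGraph n T ≃g S) then chi n p T X else 0
    expQ n p f = 0 ∧
    expQ n p (fun X => f X ^ 2) =
      (n.descFactorial (Fintype.card W) : ℝ) / (Nat.card (S ≃g S) : ℝ) ∧
    expQ n p (fun X => f X ^ 2) =
      ((Finset.univ.filter fun T : Finset (Edge n) =>
          Nonempty (finsetGraph n T ≃g S)).card : ℝ) ∧
    expP n p H f =
      (copyCount S H : ℝ) / (Nat.card (S ≃g S) : ℝ) *
        ((1 - p) / p) ^ ((Nat.card S.edgeSet : ℝ) / 2) := by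
  intro f
  obtain ⟨u0, v0, huv0⟩ := hedge
  haveI hautne : Nonempty (S ≃g S) := ⟨RelIso.refl _⟩
  have hautpos : 0 < Nat.card (S ≃g S) := Nat.card_pos
  have hautR : ((Nat.card (S ≃g S) : ℝ)) ≠ 0 := Nat.cast_ne_zero.mpr hautpos.ne'
  have hnotempty : ∀ T : Finset (Edge n), Nonempty (finsetGraph n T ≃g S) → T ≠ ∅ := by
    intro T hne h0
    obtain ⟨g⟩ := hne
    obtain ⟨e, he, -⟩ := PlantedAux.mem_edgeVerts_iff.mp (g.symm u0).2
    rw [h0] at he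
    exact absurd he (Finset.notMem_empty e)
  -- Part 1
  have h1 : expQ n p f = 0 := by
    show expQ n p (fun X => ∑ T : Finset (Edge n),
      if Nonempty (finsetGraph n T ≃g S) then chi n p T X else 0) = 0
    rw [PlantedAux.expQ_sum]
    apply Finset.sum_eq_zero
    intro T _
    by_cases hc : Nonempty (finsetGraph n T ≃g S)
    · have he : (fun X : EdgeFun n =>
          if Nonempty (finsetGraph n T ≃g S) then chi n p T X else 0) = chi n p T :=
        funext fun X => if_pos hc
      rw [he, PlantedAux.expQ_chi hp, if_neg (hnotempty T hc)]
    · have he : (fun X : EdgeFun n =>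
          if Nonempty (finsetGraph n T ≃g S) then chi n p T X else 0) = fun _ => 0 :=
        funext fun X => if_neg hc
      rw [he, PlantedAux.expQ_zero]
  -- second moment, sum form
  have hS : expQ n p (fun X => f X ^ 2) =
      ∑ T : Finset (Edge n), if Nonempty (finsetGraph n T ≃g S) then (1 : ℝ) else 0 := by
    have hsq : (fun X => f X ^ 2) = fun X => ∑ T : Finset (Edge n), ∑ U : Finset (Edge n),
        (if Nonempty (finsetGraph n T ≃g S) then chi n p T X else 0) *
        (if Nonempty (finsetGraph n U ≃g S) then chi n p U X else 0) := by
      funext X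
      rw [sq, Finset.sum_mul_sum]
    rw [hsq, PlantedAux.expQ_sum]
    rw [Finset.sum_congr rfl (fun T _ => PlantedAux.expQ_sum Finset.univ _)]
    have hTU : ∀ T U : Finset (Edge n), expQ n p (fun X =>
        (if Nonempty (finsetGraph n T ≃g S) then chi n p T X else 0) *
        (if Nonempty (finsetGraph n U ≃g S) then chi n p U X else 0)) =
        if U = T then (if Nonempty (finsetGraph n T ≃g S) then (1:ℝ) else 0) else 0 := by
      intro T U
      by_cases hcT : Nonempty (finsetGraph n T ≃g S)
      · by_cases hcU : Nonempty (finsetGraph n U ≃g S)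
        · have he : (fun X : EdgeFun n =>
              (if Nonempty (finsetGraph n T ≃g S) then chi n p T X else 0) *
              (if Nonempty (finsetGraph n U ≃g S) then chi n p U X else 0)) =
              fun X => chi n p T X * chi n p U X :=
            funext fun X => by rw [if_pos hcT, if_pos hcU]
          rw [he, PlantedAux.expQ_chi_mul_chi hp]
          by_cases hTU : T = U
          · rw [if_pos hTU, if_pos hTU.symm, if_pos hcT]
          · rw [if_neg hTU, if_neg (fun h => hTU h.symm)]
        · have he : (fun X : EdgeFun n =>
              (if Nonempty (finsetGraph n T ≃g S) then chi n p T X else 0) *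
              (if Nonempty (finsetGraph n U ≃g S) then chi n p U X else 0)) =
              fun _ => 0 :=
            funext fun X => by rw [if_neg hcU, mul_zero]
          rw [he, PlantedAux.expQ_zero, if_neg (fun h => hcU (by rw [← h] at hcT; exact hcT))]
      · have he : (fun X : EdgeFun n =>
            (if Nonempty (finsetGraph n T ≃g S) then chi n p T X else 0) *
            (if Nonempty (finsetGraph n U ≃g S) then chi n p U X else 0)) =
            fun _ => 0 :=
          funext fun X => by rw [if_neg hcT, zero_mul]
        rw [he, PlantedAux.expQ_zero]
        by_cases hU : U = T
        · rw [if_pos hU, if_neg hcT]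
        · rw [if_neg hU]
    rw [Finset.sum_congr rfl (fun T _ => Finset.sum_congr rfl (fun U _ => hTU T U))]
    rw [Finset.sum_congr rfl (fun T _ => Finset.sum_ite_eq' Finset.univ T _)]
    simp only [Finset.mem_univ, if_true]
  -- Part 3
  have h3 : expQ n p (fun X => f X ^ 2) =
      ((Finset.univ.filter fun T : Finset (Edge n) =>
        Nonempty (finsetGraph n T ≃g S)).card : ℝ) := by
    rw [hS]
    exact Finset.sum_boole _ _
  -- Part 2
  have h2 : expQ n p (fun X => f X ^ 2) =
      (n.descFactorial (Fintype.card W) : ℝ) / (Nat.card (S ≃g S) : ℝ) := by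
    rw [hS]
    have ha1 := PlantedAux.card_A (n := n) (S := S) hnoiso (fun _ => True)
    have ha2 := PlantedAux.card_A_true (n := n) (S := S) hnoiso
    rw [ha2] at ha1
    rw [ha1, Nat.cast_sum, Finset.sum_div]
    apply Finset.sum_congr rfl
    intro T _
    by_cases hc : Nonempty (finsetGraph n T ≃g S)
    · rw [if_pos hc, apply_ite (Nat.cast : ℕ → ℝ), if_pos ⟨hc, fun e _ => trivial⟩,
        div_self hautR]
    · rw [if_neg hc, apply_ite (Nat.cast : ℕ → ℝ), if_neg (fun h => hc h.1)]
      simp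
  -- Part 4
  have hm : ∀ T : Finset (Edge n), Nonempty (finsetGraph n T ≃g S) →
      T.card = Nat.card S.edgeSet := fun T h => PlantedAux.card_edge T h.some
  have h4 : expP n p H f =
      (copyCount S H : ℝ) / (Nat.card (S ≃g S) : ℝ) *
        ((1 - p) / p) ^ ((Nat.card S.edgeSet : ℝ) / 2) := by
    have hpq : (0:ℝ) < p * (1 - p) := by nlinarith [hp.1, hp.2]
    set c0 : ℝ := (1 - p) / Real.sqrt (p * (1 - p)) with hc0def
    set m : ℕ := Nat.card S.edgeSet with hmdef
    -- rpow identity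
    have hc0 : c0 = Real.sqrt ((1 - p) / p) := by
      have hsq : c0 ^ 2 = (1 - p) / p := by
        rw [hc0def, div_pow, Real.sq_sqrt hpq.le]
        rw [div_eq_div_iff (by positivity) (by linarith [hp.1])]
        ring
      rw [← hsq, Real.sqrt_sq (div_nonneg (by linarith [hp.2]) (Real.sqrt_nonneg _))]
    have hpow : c0 ^ m = ((1 - p) / p) ^ ((m : ℝ) / 2) := by
      have hx : (0:ℝ) ≤ (1 - p) / p := by
        apply div_nonneg <;> linarith [hp.1, hp.2]
      rw [hc0, show ((m : ℝ) / 2) = (1/2 : ℝ) * (m : ℕ) by push_cast; ring,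
        Real.rpow_mul hx, Real.rpow_natCast, Real.sqrt_eq_rpow]
    -- per-φ inner computation
    have key : ∀ (φ : V ↪ Fin n) (T : Finset (Edge n)),
        (∑ X : EdgeFun n, nullWeight n p X *
          (if Nonempty (finsetGraph n T ≃g S) then chi n p T (plant n H φ X) else 0)) =
        if Nonempty (finsetGraph n T ≃g S) ∧
            (∀ e ∈ T, ∃ u v, H.Adj u v ∧ (e : Sym2 (Fin n)) = s(φ u, φ v))
        then c0 ^ m else 0 := by
      intro φ T
      by_cases hc : Nonempty (finsetGraph n T ≃g S)
      · have he : ∀ X : EdgeFun n,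
            (if Nonempty (finsetGraph n T ≃g S) then chi n p T (plant n H φ X) else 0) =
            chi n p T (plant n H φ X) := fun X => if_pos hc
        simp_rw [he]
        rw [PlantedAux.inner_sum hp H φ T, hm T hc]
        by_cases hall : ∀ e ∈ T, ∃ u v, H.Adj u v ∧ (e : Sym2 (Fin n)) = s(φ u, φ v)
        · rw [if_pos hall, if_pos ⟨hc, hall⟩]
        · rw [if_neg hall, if_neg (fun h => hall h.2)]
      · simp_rw [if_neg hc, mul_zero, Finset.sum_const_zero]
        rw [if_neg (fun h => hc h.1)]
    -- per-φ total
    have hval : ∀ φ : V ↪ Fin n,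
        (∑ T : Finset (Edge n),
          if Nonempty (finsetGraph n T ≃g S) ∧
              (∀ e ∈ T, ∃ u v, H.Adj u v ∧ (e : Sym2 (Fin n)) = s(φ u, φ v))
          then c0 ^ m else 0) =
        (copyCount S H : ℝ) / (Nat.card (S ≃g S) : ℝ) * c0 ^ m := by
      intro φ
      have ha1 := PlantedAux.card_A (n := n) (S := S) hnoiso
        (fun q => ∃ u v, H.Adj u v ∧ q = s(φ u, φ v))
      have ha2 := PlantedAux.card_A_plant (n := n) (S := S) H φ hnoiso
      rw [ha2] at ha1
      rw [ha1, Nat.cast_sum, Finset.sum_div, Finset.sum_mul]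
      apply Finset.sum_congr rfl
      intro T _
      by_cases hc : Nonempty (finsetGraph n T ≃g S) ∧
          (∀ e ∈ T, ∃ u v, H.Adj u v ∧ (e : Sym2 (Fin n)) = s(φ u, φ v))
      · rw [if_pos hc, apply_ite (Nat.cast : ℕ → ℝ), if_pos hc, div_mul_eq_mul_div,
          mul_comm, mul_div_assoc, div_self hautR, mul_one]
      · rw [if_neg hc, apply_ite (Nat.cast : ℕ → ℝ), if_neg hc]
        simp
    -- assemble
    have hN : (Fintype.card (V ↪ Fin n) : ℝ) ≠ 0 := by
      have : Nonempty (V ↪ Fin n) :=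
        Function.Embedding.nonempty_iff_card_le.mpr (by rw [Fintype.card_fin]; exact hcard)
      exact Nat.cast_ne_zero.mpr (Fintype.card_pos_iff.mpr this).ne'
    show (Fintype.card (V ↪ Fin n) : ℝ)⁻¹ *
        (∑ φ : V ↪ Fin n, ∑ X : EdgeFun n, nullWeight n p X * f (plant n H φ X)) = _
    have hswap : ∀ φ : V ↪ Fin n,
        (∑ X : EdgeFun n, nullWeight n p X * f (plant n H φ X)) =
        ∑ T : Finset (Edge n), ∑ X : EdgeFun n, nullWeight n p X *
          (if Nonempty (finsetGraph n T ≃g S) then chi n p T (plant n H φ X) else 0) := by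
      intro φ
      show (∑ X : EdgeFun n, nullWeight n p X * (∑ T : Finset (Edge n),
        if Nonempty (finsetGraph n T ≃g S) then chi n p T (plant n H φ X) else 0)) = _
      simp_rw [Finset.mul_sum]
      rw [Finset.sum_comm]
    rw [Finset.sum_congr rfl (fun φ _ => hswap φ)]
    rw [Finset.sum_congr rfl (fun φ _ =>
      Finset.sum_congr rfl (fun T _ => key φ T))]
    rw [Finset.sum_congr rfl (fun φ _ => hval φ)]
    rw [Finset.sum_const, Finset.card_univ, nsmul_eq_mul, ← mul_assoc,
      inv_mul_cancel₀ hN, one_mul, hpow]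
  exact ⟨h1, h2, h3, h4⟩
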